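/- arXiv:1501.00906 — 3 statements merged into one kernel-verified Lean document; each statement's English description precedes it below -/
import Mathlib

section
/- Let k be a field of characteristic p > 0, R a commutative k-algebra, and d a k-linear derivation of R with d^{(p)} = d (p-fold composite). Define d_0 = id_R, d_1 = d, and recursively d_{n+1} = (1/(n+1))·(d ∘ d_n − n·d_n) for 1 ≤ n ≤ p − 2 (the scalar n+1 is invertible in k). Then (d_n)_{0 ≤ n < p} is a 1-truncated HS-derivation on R over k which is 𝔾_m[1]-iterative. -/
/-- `c i j n` is the coefficient of `X^i Y^j` in `(X + Y + XY)^n`. -/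
noncomputable def gmIterCoeff (i j n : ℕ) : ℕ :=
  MvPolynomial.coeff (Finsupp.single (0 : Fin 2) i + Finsupp.single (1 : Fin 2) j)
    ((MvPolynomial.X 0 + MvPolynomial.X 1 +
      MvPolynomial.X 0 * MvPolynomial.X 1 : MvPolynomial (Fin 2) ℕ) ^ n)

private lemma finsupp_pair_eq (s t i j : ℕ) :
    (Finsupp.single (0 : Fin 2) s + Finsupp.single (1 : Fin 2) t
      = Finsupp.single (0 : Fin 2) i + Finsupp.single (1 : Fin 2) j) ↔ (s = i ∧ t = j) := by
  constructor
  · intro h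
    have h0 := DFunLike.congr_fun h 0
    have h1 := DFunLike.congr_fun h 1
    simp [Finsupp.single_apply, Finsupp.add_apply] at h0 h1
    exact ⟨h0, h1⟩
  · rintro ⟨rfl, rfl⟩; rfl

private lemma one_add_pow {M : Type*} [CommSemiring M] (z : M) (m : ℕ) :
    (1 + z) ^ m = ∑ s ∈ Finset.range (m + 1), m.choose s • z ^ s := by
  rw [add_comm, add_pow]
  refine Finset.sum_congr rfl fun s hs => ?_
  rw [one_pow, mul_one, nsmul_eq_mul, mul_comm]

open MvPolynomial Finset in
private lemma gm_nat_id (i j m : ℕ) :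
    m.choose i * m.choose j = ∑ n ∈ Finset.range (m + 1), m.choose n * gmIterCoeff i j n := by
  classical
  have key : ((1 + X 0) * (1 + X 1) : MvPolynomial (Fin 2) ℕ) ^ m
      = (1 + (X 0 + X 1 + X 0 * X 1)) ^ m := by ring_nf
  rw [mul_pow, one_add_pow, one_add_pow, one_add_pow, Finset.sum_mul_sum] at key
  have key2 := congrArg
    (MvPolynomial.coeff (Finsupp.single (0 : Fin 2) i + Finsupp.single (1 : Fin 2) j)) key
  simp only [MvPolynomial.coeff_sum, smul_mul_smul_comm, X_pow_eq_monomial,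
    monomial_mul, MvPolynomial.coeff_smul, coeff_monomial, one_mul, mul_one,
    smul_eq_mul] at key2
  have hsplit : ∀ s t : ℕ,
      (if Finsupp.single (0 : Fin 2) s + Finsupp.single (1 : Fin 2) t
        = Finsupp.single (0 : Fin 2) i + Finsupp.single (1 : Fin 2) j then (1:ℕ) else 0)
      = (if s = i then 1 else 0) * (if t = j then 1 else 0) := by
    intro s t
    simp only [finsupp_pair_eq]
    by_cases hs : s = i <;> by_cases ht : t = j <;> simp [hs, ht]
  calc m.choose i * m.choose j
      = (∑ s ∈ range (m+1), m.choose s * if s = i then 1 else 0)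
        * (∑ t ∈ range (m+1), m.choose t * if t = j then 1 else 0) := by
        congr 1 <;> rw [Finset.sum_congr rfl (fun s _ => by rw [mul_ite, mul_one, mul_zero]),
          Finset.sum_ite_eq']
        · by_cases hi : i ∈ range (m+1)
          · rw [if_pos hi]
          · rw [if_neg hi, Nat.choose_eq_zero_of_lt (by simpa using hi)]
        · by_cases hj : j ∈ range (m+1)
          · rw [if_pos hj]
          · rw [if_neg hj, Nat.choose_eq_zero_of_lt (by simpa using hj)]
    _ = ∑ s ∈ range (m+1), ∑ t ∈ range (m+1),
          m.choose s * m.choose t *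
            if Finsupp.single (0 : Fin 2) s + Finsupp.single (1 : Fin 2) t
              = Finsupp.single (0 : Fin 2) i + Finsupp.single (1 : Fin 2) j then 1 else 0 := by
        rw [Finset.sum_mul_sum]
        refine Finset.sum_congr rfl fun s _ => Finset.sum_congr rfl fun t _ => ?_
        rw [hsplit, mul_mul_mul_comm]
    _ = ∑ n ∈ Finset.range (m + 1), m.choose n * gmIterCoeff i j n := by
        rw [key2]
        rfl

private lemma gm_nat_id' {p : ℕ} (i j m : ℕ) (hm : m < p) :
    (m.choose i * m.choose j : ℕ)
      = ∑ n ∈ Finset.range p, gmIterCoeff i j n * m.choose n := by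
  rw [gm_nat_id i j m]
  rw [Finset.sum_congr rfl (fun n _ => mul_comm (m.choose n) (gmIterCoeff i j n))]
  refine Finset.sum_subset (by intro t ht; simp at ht ⊢; omega) ?_
  intro t ht hnt
  simp only [Finset.mem_range, not_lt] at hnt
  rw [Nat.choose_eq_zero_of_lt (by omega), mul_zero]

/-- Let `d` be a `k`-linear derivation of a commutative `k`-algebra `R`
(`char k = p > 0`) with `d^{(p)} = d`. The sequence defined by `d_0 = id`, `d_1 = d` and
`d_{n+1} = (1/(n+1))·(d ∘ d_n − n·d_n)` for `1 ≤ n ≤ p−2` is a `1`-truncated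
HS-derivation on `R` over `k` which is `𝔾ₘ[1]`-iterative. -/
theorem multiplicative_derivation_expands_to_gm_one_truncated
    (k : Type*) [Field k] (p : ℕ) [Fact p.Prime] [CharP k p]
    (R : Type*) [CommRing R] [Algebra k R]
    (d : Derivation k R R)
    (hdp : ∀ x, (⇑d)^[p] x = d x)
    (D : ℕ → R → R)
    (hD0 : D 0 = id)
    (hD1 : D 1 = ⇑d)
    (hrec : ∀ n, 1 ≤ n → n ≤ p - 2 → ∀ x,
      D (n + 1) x = ((n : k) + 1)⁻¹ • (d (D n x) - (n : k) • D n x)) :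
    (∀ i, i < p → ∀ x y, D i (x + y) = D i x + D i y) ∧
    (∀ i, i < p → ∀ x y,
      D i (x * y) = ∑ jl ∈ Finset.HasAntidiagonal.antidiagonal i, D jl.1 x * D jl.2 y) ∧
    (∀ c : k, ∀ i, 0 < i → i < p → D i (algebraMap k R c) = 0) ∧
    (∀ i j, i < p → j < p → ∀ x,
      D i (D j x) = ∑ n ∈ Finset.range p, gmIterCoeff i j n • D n x) := by
  classical
  have hp : p.Prime := Fact.out
  have hp2 : 2 ≤ p := hp.two_le
  -- basic nonvanishing of casts
  have hlt : ∀ m : ℕ, 0 < m → m < p → (m : k) ≠ 0 := by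
    intro m h1 h2
    rw [Ne, CharP.cast_eq_zero_iff k p]
    exact fun hd => absurd (Nat.le_of_dvd h1 hd) (by omega)
  have hfac : ∀ n : ℕ, n < p → ((n.factorial : k)) ≠ 0 := by
    intro n hn
    rw [Ne, CharP.cast_eq_zero_iff k p, Nat.Prime.dvd_factorial hp]
    omega
  -- the derivation as an endomorphism
  set a : Module.End k R := d.toLinearMap with ha_def
  have ha : ∀ x, a x = d x := fun x => rfl
  have hap : a ^ p = a := by
    ext x
    rw [Module.End.pow_apply]
    exact hdp x
  -- binomial polynomials
  set B : ℕ → Polynomial k := fun n => ((n.factorial : k))⁻¹ • descPochhammer k n with hB_def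
  -- step formula for d ∘ D j
  have hDstep : ∀ j, j + 1 < p → ∀ z,
      d (D j z) = ((j : k) + 1) • D (j + 1) z + (j : k) • D j z := by
    intro j hj z
    match j with
    | 0 => simp [hD0, hD1]
    | (m+1) =>
      have hc : (((m+1 : ℕ) : k) + 1) ≠ 0 := by
        intro h
        apply hlt (m+2) (by omega) (by omega)
        push_cast at h ⊢
        linear_combination h
      have h := hrec (m+1) (by omega) (by omega) z
      rw [h, smul_inv_smul₀ hc, sub_add_cancel]
  -- D n is given by the binomial polynomial in d
  have hDB : ∀ n, n < p → ∀ x, D n x = Polynomial.aeval a (B n) x := by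
    intro n
    induction n with
    | zero =>
      intro _ x
      simp [hD0, hB_def, descPochhammer_zero]
    | succ n ih =>
      intro hn x
      by_cases hn0 : n = 0
      · subst hn0
        simp [hD1, hB_def, descPochhammer_one, ha]
      · have hn1 : 1 ≤ n := Nat.pos_of_ne_zero hn0
        have hfn : ((n.factorial : k)) ≠ 0 := hfac n (by omega)
        have hc : ((n : k) + 1) ≠ 0 := by
          have := hlt (n+1) (by omega) (by omega)
          push_cast at this
          exact this
        have hr := hrec n hn1 (by omega) x
        rw [hr, ih (by omega) x]
        have hBsucc : B (n+1)
            = ((n : k) + 1)⁻¹ • ((n.factorial : k))⁻¹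
              • ((Polynomial.X - Polynomial.C (n : k)) * descPochhammer k n) := by
          simp only [hB_def]
          rw [descPochhammer_succ_right, Nat.factorial_succ, mul_comm (descPochhammer k n),
            Polynomial.C_eq_natCast]
          push_cast
          rw [mul_inv, smul_smul]
        rw [hBsucc]
        simp only [hB_def, map_smul, map_mul, map_sub, Polynomial.aeval_X,
          Polynomial.aeval_C, LinearMap.smul_apply, Module.End.mul_apply,
          LinearMap.sub_apply, Module.algebraMap_end_apply, Derivation.map_smul, ha]
        module
  -- additivity
  have hadd : ∀ i, i < p → ∀ x y, D i (x + y) = D i x + D i y := by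
    intro i hi x y
    rw [hDB i hi, hDB i hi, hDB i hi, map_add]
  -- Leibniz rule
  have hmul : ∀ i, i < p → ∀ x y,
      D i (x * y) = ∑ q ∈ Finset.range (i+1), D q x * D (i - q) y := by
    intro i
    induction i with
    | zero => intro _ x y; simp [hD0]
    | succ n ih =>
      intro hn x y
      by_cases hn0 : n = 0
      · subst hn0
        simp only [hD0, hD1, Finset.sum_range_succ, Finset.sum_range_one]
        rw [d.leibniz, smul_eq_mul, smul_eq_mul]
        simp only [Nat.sub_self, Nat.sub_zero, hD0, hD1, id_eq]
        ring
      · have hn1 : 1 ≤ n := Nat.pos_of_ne_zero hn0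
        have hc : ((n : k) + 1) ≠ 0 := by
          have := hlt (n+1) (by omega) (by omega)
          push_cast at this
          exact this
        have hr := hrec n hn1 (by omega) (x * y)
        rw [hr, ih (by omega) x y]
        have key : d (∑ q ∈ Finset.range (n+1), D q x * D (n - q) y)
            - (n : k) • ∑ q ∈ Finset.range (n+1), D q x * D (n - q) y
            = ((n : k) + 1) • ∑ q ∈ Finset.range (n+2), D q x * D (n + 1 - q) y := by
          rw [map_sum, Finset.smul_sum, ← Finset.sum_sub_distrib]
          have step : ∀ q ∈ Finset.range (n+1),
              d (D q x * D (n - q) y) - (n : k) • (D q x * D (n - q) y)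
              = ((q : k) + 1) • (D (q+1) x * D (n - q) y)
                + (((n - q : ℕ) : k) + 1) • (D q x * D (n - q + 1) y) := by
            intro q hq
            rw [Finset.mem_range] at hq
            have hq' : q ≤ n := by omega
            have hcast : ((n - q : ℕ) : k) = (n : k) - (q : k) := by
              rw [Nat.cast_sub hq']
            rw [d.leibniz, smul_eq_mul, smul_eq_mul,
              mul_comm (D (n - q) y) (d (D q x)),
              hDstep q (by omega), hDstep (n - q) (by omega), hcast]
            simp only [mul_add, add_mul, mul_smul_comm, smul_mul_assoc]
            module
          rw [Finset.sum_congr rfl step, Finset.sum_add_distrib]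
          have hT1 : ∑ q ∈ Finset.range (n+1), ((q : k) + 1) • (D (q+1) x * D (n - q) y)
              = ∑ q ∈ Finset.range (n+2), (q : k) • (D q x * D (n + 1 - q) y) := by
            conv_rhs => rw [Finset.sum_range_succ']
            simp only [Nat.cast_zero, zero_smul, add_zero]
            refine Finset.sum_congr rfl fun q hq => ?_
            have h2 : n + 1 - (q + 1) = n - q := by omega
            rw [h2]
            push_cast
            ring_nf
          have hT2 : ∑ q ∈ Finset.range (n+1), (((n - q : ℕ) : k) + 1) • (D q x * D (n - q + 1) y)
              = ∑ q ∈ Finset.range (n+2), ((n + 1 - q : ℕ) : k) • (D q x * D (n + 1 - q) y) := by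
            conv_rhs => rw [Finset.sum_range_succ]
            simp only [Nat.sub_self, Nat.cast_zero, zero_smul, add_zero]
            refine Finset.sum_congr rfl fun q hq => ?_
            rw [Finset.mem_range] at hq
            have h1 : n + 1 - q = (n - q) + 1 := by omega
            rw [h1]
            push_cast
            ring_nf
          rw [hT1, hT2, ← Finset.sum_add_distrib, Finset.smul_sum]
          refine Finset.sum_congr rfl fun q hq => ?_
          rw [Finset.mem_range] at hq
          have h1 : ((n + 1 - q : ℕ) : k) = (n : k) + 1 - (q : k) := by
            rw [Nat.cast_sub (by omega)]
            push_cast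
            ring
          rw [h1, ← add_smul]
          ring_nf
        rw [key, inv_smul_smul₀ hc]
  -- vanishing on constants
  have hconst : ∀ c : k, ∀ i, 0 < i → i < p → D i (algebraMap k R c) = 0 := by
    intro c i
    induction i with
    | zero => intro h; omega
    | succ n ih =>
      intro _ hn
      by_cases hn0 : n = 0
      · subst hn0
        rw [hD1, Derivation.map_algebraMap]
      · have hn1 : 1 ≤ n := Nat.pos_of_ne_zero hn0
        have hr := hrec n hn1 (by omega) (algebraMap k R c)
        rw [hr, ih (by omega) (by omega)]
        simp
  -- evaluation of B n at natural numbers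
  have hBeval : ∀ n, n < p → ∀ m : ℕ,
      Polynomial.eval (m : k) (B n) = (m.choose n : k) := by
    intro n hn m
    simp only [hB_def]
    rw [Polynomial.eval_smul, descPochhammer_eval_eq_descFactorial,
      Nat.descFactorial_eq_factorial_mul_choose]
    push_cast
    rw [smul_eq_mul, inv_mul_cancel_left₀ (hfac n hn)]
  -- Fermat
  have frob : ∀ m : ℕ, ((m : k)) ^ p = (m : k) := by
    intro m
    have h1 : ((ZMod.castHom (dvd_refl p) k) (m : ZMod p)) = (m : k) := map_natCast _ m
    rw [← h1, ← map_pow, ZMod.pow_card]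
  -- key vanishing lemma
  have hvanish : ∀ f : Polynomial k,
      (∀ m : ℕ, m < p → Polynomial.eval (m : k) f = 0) → Polynomial.aeval a f = 0 := by
    intro f hev
    set M : Polynomial k := Polynomial.X ^ p - Polynomial.X with hM_def
    have hmonic : M.Monic := by
      apply Polynomial.monic_X_pow_sub
      calc (Polynomial.X : Polynomial k).degree ≤ 1 := Polynomial.degree_X_le
        _ < (p : WithBot ℕ) := by exact_mod_cast Nat.lt_of_lt_of_le Nat.one_lt_two hp2
    have hMdeg : M.natDegree = p := FiniteField.X_pow_card_sub_X_natDegree_eq k (by omega)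
    have hMeval : ∀ m : ℕ, m < p → Polynomial.eval (m : k) M = 0 := by
      intro m _
      simp only [hM_def, Polynomial.eval_sub, Polynomial.eval_pow, Polynomial.eval_X]
      rw [frob m, sub_self]
    have hsplit : f %ₘ M + M * (f /ₘ M) = f := Polynomial.modByMonic_add_div f M
    have hreval : ∀ m : ℕ, m < p → Polynomial.eval (m : k) (f %ₘ M) = 0 := by
      intro m hm
      have := congrArg (Polynomial.eval ((m : k))) hsplit
      rw [Polynomial.eval_add, Polynomial.eval_mul, hMeval m hm, zero_mul, add_zero,
        hev m hm] at this
      exact this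
    have hr0 : f %ₘ M = 0 := by
      by_cases h0 : f %ₘ M = 0
      · exact h0
      · refine Polynomial.eq_zero_of_natDegree_lt_card_of_eval_eq_zero' (f %ₘ M)
          ((Finset.range p).image (fun m : ℕ => (m : k))) ?_ ?_
        · intro z hz
          rw [Finset.mem_image] at hz
          obtain ⟨m, hm, rfl⟩ := hz
          exact hreval m (Finset.mem_range.mp hm)
        · have hcard : ((Finset.range p).image (fun m : ℕ => (m : k))).card = p := by
            rw [Finset.card_image_of_injOn, Finset.card_range]
            intro x hx y hy hxy
            exact CharP.natCast_injOn_Iio k p (by simpa using hx) (by simpa using hy) hxy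
          rw [hcard, ← hMdeg]
          exact Polynomial.natDegree_lt_natDegree h0 (Polynomial.degree_modByMonic_lt f hmonic)
    have hM0 : Polynomial.aeval a M = 0 := by
      simp only [hM_def, map_sub, map_pow, Polynomial.aeval_X]
      rw [hap, sub_self]
    rw [← hsplit, map_add, map_mul, hr0, map_zero, hM0, zero_mul, add_zero]
  -- the iterativity identity at the polynomial level
  have hiter : ∀ i j, i < p → j < p → ∀ x,
      D i (D j x) = ∑ n ∈ Finset.range p, gmIterCoeff i j n • D n x := by
    intro i j hi hj x
    have hkey : Polynomial.aeval a
        (B i * B j - ∑ n ∈ Finset.range p,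
          Polynomial.C ((gmIterCoeff i j n : k)) * B n) = 0 := by
      apply hvanish
      intro m hm
      rw [Polynomial.eval_sub, Polynomial.eval_mul, hBeval i hi m, hBeval j hj m,
        Polynomial.eval_finset_sum]
      have : ∀ n ∈ Finset.range p,
          Polynomial.eval (m : k) (Polynomial.C ((gmIterCoeff i j n : k)) * B n)
          = (gmIterCoeff i j n : k) * (m.choose n : k) := by
        intro n hn
        rw [Polynomial.eval_mul, Polynomial.eval_C, hBeval n (Finset.mem_range.mp hn) m]
      rw [Finset.sum_congr rfl this]
      have hnid := gm_nat_id' i j m hm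
      have : ((m.choose i * m.choose j : ℕ) : k)
          = ((∑ n ∈ Finset.range p, gmIterCoeff i j n * m.choose n : ℕ) : k) := by
        exact_mod_cast congrArg (fun t : ℕ => (t : k)) hnid
      push_cast at this
      rw [sub_eq_zero]
      exact this
    have heq : Polynomial.aeval a (B i * B j)
        = Polynomial.aeval a (∑ n ∈ Finset.range p,
            Polynomial.C ((gmIterCoeff i j n : k)) * B n) := by
      rw [← sub_eq_zero, ← map_sub]
      exact hkey
    rw [hDB j hj x, hDB i hi, ← Module.End.mul_apply, ← map_mul, heq, map_sum,
      LinearMap.sum_apply]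
    refine Finset.sum_congr rfl fun n hn => ?_
    rw [map_mul, Polynomial.aeval_C, Module.End.mul_apply, Module.algebraMap_end_apply,
      ← hDB n (Finset.mem_range.mp hn) x, Nat.cast_smul_eq_nsmul]
  refine ⟨hadd, ?_, hconst, hiter⟩
  intro i hi x y
  rw [Finset.Nat.sum_antidiagonal_eq_sum_range_succ_mk]
  exact hmul i hi x y
end

section
/- Let k be a field of characteristic p > 0, R a commutative k-algebra, and d a k-linear derivation of R. Then d^{(p)} = 0 (p-fold composite) if and only if there exists a 1-truncated HS-derivation (d_n)_{0 ≤ n < p} on R over k which is 𝔾_a[1]-iterative and satisfies d_1 = d; moreover, when d^{(p)} = 0 one may take d_n = (1/n!)·d^{(n)} for 0 ≤ n < p. -/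
section Aux

variable {k : Type*} [Field k] {R : Type*} [CommRing R] [Algebra k R] (d : Derivation k R R)

private lemma iter_eq (n : ℕ) : (⇑d)^[n] = ⇑(d.toLinearMap ^ n) := by
  rw [Module.End.coe_pow]
  rfl

private lemma iter_add (n : ℕ) (x y : R) :
    (⇑d)^[n] (x + y) = (⇑d)^[n] x + (⇑d)^[n] y := by
  simp [iter_eq, map_add]

private lemma iter_smul (n : ℕ) (c : k) (x : R) :
    (⇑d)^[n] (c • x) = c • (⇑d)^[n] x := by
  simp [iter_eq, map_smul]

private lemma iter_zero (n : ℕ) : (⇑d)^[n] (0 : R) = 0 := by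
  simp [iter_eq, map_zero]

private lemma iter_leibniz (n : ℕ) (x y : R) :
    (⇑d)^[n] (x * y) = ∑ jl ∈ Finset.HasAntidiagonal.antidiagonal n,
      n.choose jl.1 • ((⇑d)^[jl.1] x * (⇑d)^[jl.2] y) := by
  induction n generalizing x y with
  | zero => simp
  | succ n ih =>
    have key : (⇑d)^[n + 1] (x * y)
        = ∑ jl ∈ Finset.HasAntidiagonal.antidiagonal n,
            (n.choose jl.1 • ((⇑d)^[jl.1] x * (⇑d)^[jl.2 + 1] y)
              + n.choose jl.1 • ((⇑d)^[jl.1 + 1] x * (⇑d)^[jl.2] y)) := by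
      rw [Function.iterate_succ_apply, d.leibniz, smul_eq_mul, smul_eq_mul,
        mul_comm y (d x), iter_add, ih, ih]
      rw [← Finset.sum_add_distrib]
      refine Finset.sum_congr rfl fun jl _ => ?_
      rw [Function.iterate_succ_apply, Function.iterate_succ_apply]
    rw [key]
    rw [Finset.sum_add_distrib]
    -- first sum over antidiagonal n of f (jl.1, jl.2+1) where f (a,b) = C(n,a) • d^a x * d^b y
    have h1 : (∑ jl ∈ Finset.HasAntidiagonal.antidiagonal n,
          n.choose jl.1 • ((⇑d)^[jl.1] x * (⇑d)^[jl.2 + 1] y))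
        = ∑ jl ∈ Finset.HasAntidiagonal.antidiagonal (n + 1),
            n.choose jl.1 • ((⇑d)^[jl.1] x * (⇑d)^[jl.2] y) := by
      rw [Finset.Nat.sum_antidiagonal_succ'
        (f := fun jl => n.choose jl.1 • ((⇑d)^[jl.1] x * (⇑d)^[jl.2] y))]
      simp [Nat.choose_succ_self]
    rw [h1, Finset.Nat.sum_antidiagonal_succ
        (f := fun jl => n.choose jl.1 • ((⇑d)^[jl.1] x * (⇑d)^[jl.2] y)),
      Finset.Nat.sum_antidiagonal_succ
        (f := fun jl => (n+1).choose jl.1 • ((⇑d)^[jl.1] x * (⇑d)^[jl.2] y))]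
    simp only [Nat.choose_zero_right]
    rw [add_assoc, ← Finset.sum_add_distrib]
    congr 1
    refine Finset.sum_congr rfl fun jl _ => ?_
    rw [← add_smul, Nat.choose_succ_succ', add_comm (n.choose jl.1)]

end Aux

/-- For a `k`-linear derivation `d` of a commutative `k`-algebra `R`
(`char k = p > 0`): `d^{(p)} = 0` iff `d` expands to a `𝔾ₐ[1]`-iterative `1`-truncated
HS-derivation on `R` over `k`; moreover when `d^{(p)} = 0` the family `d_n = d^{(n)}/n!`
is such an expansion. -/
theorem nilpotent_derivation_expands_to_ga_one_truncated
    (k : Type*) [Field k] (p : ℕ) [Fact p.Prime] [CharP k p]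
    (R : Type*) [CommRing R] [Algebra k R]
    (d : Derivation k R R) :
    ((∀ x, (⇑d)^[p] x = 0) ↔
      ∃ D : ℕ → R → R,
        D 0 = id ∧
        (∀ i, i < p → ∀ x y, D i (x + y) = D i x + D i y) ∧
        (∀ i, i < p → ∀ x y,
          D i (x * y) = ∑ jl ∈ Finset.HasAntidiagonal.antidiagonal i, D jl.1 x * D jl.2 y) ∧
        (∀ c : k, ∀ i, 0 < i → i < p → D i (algebraMap k R c) = 0) ∧
        (∀ i j, i + j < p → ∀ x, D i (D j x) = (i + j).choose i • D (i + j) x) ∧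
        (∀ i j, i < p → j < p → p ≤ i + j → ∀ x, D i (D j x) = 0) ∧
        D 1 = ⇑d) ∧
    ((∀ x, (⇑d)^[p] x = 0) →
      ∀ D : ℕ → R → R, (∀ n x, D n x = ((n.factorial : k))⁻¹ • (⇑d)^[n] x) →
        D 0 = id ∧
        (∀ i, i < p → ∀ x y, D i (x + y) = D i x + D i y) ∧
        (∀ i, i < p → ∀ x y,
          D i (x * y) = ∑ jl ∈ Finset.HasAntidiagonal.antidiagonal i, D jl.1 x * D jl.2 y) ∧
        (∀ c : k, ∀ i, 0 < i → i < p → D i (algebraMap k R c) = 0) ∧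
        (∀ i j, i + j < p → ∀ x, D i (D j x) = (i + j).choose i • D (i + j) x) ∧
        (∀ i j, i < p → j < p → p ≤ i + j → ∀ x, D i (D j x) = 0) ∧
        D 1 = ⇑d) := by
  have hp : p.Prime := Fact.out
  have hp2 : 2 ≤ p := hp.two_le
  -- nonvanishing of factorials below p
  have hfac : ∀ n, n < p → (n.factorial : k) ≠ 0 := by
    intro n hn h0
    rw [CharP.cast_eq_zero_iff k p] at h0
    exact absurd (hp.dvd_factorial.mp h0) (Nat.not_le.mpr hn)
  -- the "moreover" part, proved first
  have main : (∀ x, (⇑d)^[p] x = 0) →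
      ∀ D : ℕ → R → R, (∀ n x, D n x = ((n.factorial : k))⁻¹ • (⇑d)^[n] x) →
        D 0 = id ∧
        (∀ i, i < p → ∀ x y, D i (x + y) = D i x + D i y) ∧
        (∀ i, i < p → ∀ x y,
          D i (x * y) = ∑ jl ∈ Finset.HasAntidiagonal.antidiagonal i, D jl.1 x * D jl.2 y) ∧
        (∀ c : k, ∀ i, 0 < i → i < p → D i (algebraMap k R c) = 0) ∧
        (∀ i j, i + j < p → ∀ x, D i (D j x) = (i + j).choose i • D (i + j) x) ∧
        (∀ i j, i < p → j < p → p ≤ i + j → ∀ x, D i (D j x) = 0) ∧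
        D 1 = ⇑d := by
    intro hdp D hD
    have iter_ge : ∀ m, p ≤ m → ∀ x : R, (⇑d)^[m] x = 0 := by
      intro m hm x
      obtain ⟨a, rfl⟩ := Nat.exists_eq_add_of_le hm
      rw [add_comm, Function.iterate_add_apply, hdp, iter_zero]
    refine ⟨?_, ?_, ?_, ?_, ?_, ?_, ?_⟩
    · funext x; simp [hD]
    · intro i _ x y; simp [hD, iter_add, smul_add]
    · intro i hi x y
      rw [hD, iter_leibniz]
      rw [Finset.smul_sum]
      refine Finset.sum_congr rfl fun jl hjl => ?_
      have hsum := Finset.HasAntidiagonal.mem_antidiagonal.mp hjl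
      rw [hD, hD, smul_mul_smul_comm]
      rw [← Nat.cast_smul_eq_nsmul k (i.choose jl.1), smul_smul]
      congr 1
      have h1 : (jl.1.factorial : k) ≠ 0 := hfac _ (lt_of_le_of_lt (by omega) hi)
      have h2 : (jl.2.factorial : k) ≠ 0 := hfac _ (lt_of_le_of_lt (by omega) hi)
      have h3 : (i.factorial : k) ≠ 0 := hfac _ hi
      field_simp
      rw [← Nat.cast_mul, ← Nat.cast_mul, ← hsum]
      norm_cast
      have hch := Nat.add_choose_mul_factorial_mul_factorial jl.2 jl.1
      rw [add_comm jl.2 jl.1] at hch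
      rw [← hch]; ring
    · intro c i hi0 hip
      rw [hD]
      obtain ⟨a, rfl⟩ := Nat.exists_eq_add_of_le hi0
      rw [add_comm, Function.iterate_add_apply]
      have : (⇑d)^[1] (algebraMap k R c) = 0 := by
        simp [Derivation.map_algebraMap]
      rw [this, iter_zero, smul_zero]
    · intro i j hij x
      rw [hD, hD, iter_smul, ← Function.iterate_add_apply, hD, smul_smul]
      rw [← Nat.cast_smul_eq_nsmul k ((i+j).choose i), smul_smul]
      congr 1
      have h1 : (i.factorial : k) ≠ 0 := hfac _ (by omega)
      have h2 : (j.factorial : k) ≠ 0 := hfac _ (by omega)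
      have h3 : ((i+j).factorial : k) ≠ 0 := hfac _ hij
      field_simp
      rw [← Nat.cast_mul, ← Nat.cast_mul]
      norm_cast
      have hch := Nat.add_choose_mul_factorial_mul_factorial j i
      rw [add_comm j i] at hch
      rw [← hch]; ring
    · intro i j _ _ hij x
      rw [hD, hD, iter_smul, ← Function.iterate_add_apply, iter_ge _ hij,
        smul_zero, smul_zero]
    · funext x; simp [hD]
  refine ⟨⟨fun hdp => ?_, ?_⟩, main⟩
  · exact ⟨fun n x => ((n.factorial : k))⁻¹ • (⇑d)^[n] x, main hdp _ fun _ _ => rfl⟩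
  · rintro ⟨D, hD0, _, _, _, hiter, hzero, hD1⟩ x
    -- d^[n] x = n! • D n x for n < p
    have key : ∀ n, n < p → ∀ x : R, (⇑d)^[n] x = n.factorial • D n x := by
      intro n
      induction n with
      | zero => intro _ x; simp [hD0]
      | succ n ih =>
        intro hn x
        rw [Function.iterate_succ_apply', ih (by omega), map_nsmul, ← hD1,
          hiter 1 n (by omega), Nat.choose_one_right, smul_smul,
          show 1 + n = n + 1 from add_comm 1 n, Nat.factorial_succ,
          mul_comm (n + 1) n.factorial]
    have h1 : (⇑d)^[p] x = (⇑d)^[1] ((⇑d)^[p-1] x) := by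
      rw [← Function.iterate_add_apply]
      congr 1
      omega
    rw [h1, key (p - 1) (by omega) x, Function.iterate_one, map_nsmul, ← hD1,
      hzero 1 (p - 1) (by omega) (by omega) (by omega), smul_zero]
end

section
/- Let k be a field. Let e : k(X,Y) → k(X,Y)⟦U,V⟧ be the unique ring homomorphism extending the k-algebra map k[X,Y] → k[X,Y]⟦U,V⟧ given by X ↦ X + U, Y ↦ Y + V (it extends to the fraction field because e(q) has invertible constant term for every nonzero q ∈ k[X,Y]), and for i, j ∈ ℕ let D_{(i,j)} : k(X,Y) → k(X,Y) send r to the coefficient of U^i V^j in e(r). Then for all i, j, the map D_{(i,j)} sends the subring k[X/Y, 1/Y] into itself and the subring k[Y/X, 1/X] into itself. -/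
private lemma fin2_cases : ∀ s t u : Fin 2, s ≠ t → u = s ∨ u = t := by decide

open MvPowerSeries in
private theorem key_lemma {k K : Type*} [Field k] [Field K] [Algebra k K]
    (e : K →+* MvPowerSeries (Fin 2) K)
    (s t : Fin 2) (hst : s ≠ t) (Xs Xt : K) (hXt : Xt ≠ 0)
    (heXs : e Xs = C (σ := Fin 2) (R := K) Xs + X s)
    (heXt : e Xt = C (σ := Fin 2) (R := K) Xt + X t)
    (heAlg : ∀ c : k, e (algebraMap k K c) = C (σ := Fin 2) (R := K) (algebraMap k K c)) :
    ∀ x ∈ Algebra.adjoin k {Xs / Xt, Xt⁻¹}, ∀ m,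
      coeff m (e x) ∈ Algebra.adjoin k {Xs / Xt, Xt⁻¹} := by
  classical
  set A := Algebra.adjoin k {Xs / Xt, Xt⁻¹} with hA
  have hXtA : Xt⁻¹ ∈ A := Algebra.subset_adjoin (by simp)
  have hXsA : Xs / Xt ∈ A := Algebra.subset_adjoin (by simp)
  set f : MvPowerSeries (Fin 2) K :=
    fun m => if m s = 0 then (-1 : K) ^ (m t) * Xt⁻¹ ^ (m t + 1) else 0 with hf
  have hcoef : ∀ m, coeff m f
      = if m s = 0 then (-1 : K) ^ (m t) * Xt⁻¹ ^ (m t + 1) else 0 := fun m => rfl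
  -- subtraction facts
  have hsub_s : ∀ m : Fin 2 →₀ ℕ, ((m - Finsupp.single t 1 : Fin 2 →₀ ℕ)) s = m s := by
    intro m
    simp [Finsupp.tsub_apply, Finsupp.single_apply, hst.symm]
  have hsub_t : ∀ m : Fin 2 →₀ ℕ, ((m - Finsupp.single t 1 : Fin 2 →₀ ℕ)) t = m t - 1 := by
    intro m; simp [Finsupp.tsub_apply]
  have hsub_s' : ∀ m : Fin 2 →₀ ℕ, ((m - Finsupp.single s 1 : Fin 2 →₀ ℕ)) s = m s - 1 := by
    intro m; simp [Finsupp.tsub_apply]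
  have hsub_t' : ∀ m : Fin 2 →₀ ℕ, ((m - Finsupp.single s 1 : Fin 2 →₀ ℕ)) t = m t := by
    intro m
    simp [Finsupp.tsub_apply, Finsupp.single_apply, hst]
  have hmul : (C (σ := Fin 2) (R := K) Xt + X t) * f = 1 := by
    ext m
    rw [add_mul, map_add, coeff_C_mul, X_def, coeff_monomial_mul, coeff_one, hcoef]
    by_cases hs : m s = 0
    · by_cases ht : m t = 0
      · have hm0 : m = 0 := by
          ext u; rcases fin2_cases s t u hst with h | h <;> simp [h, hs, ht]
        have hle : ¬ Finsupp.single t 1 ≤ m := by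
          rw [Finsupp.single_le_iff]; omega
        simp [hs, ht, hm0, hle, mul_inv_cancel₀ hXt]
      · obtain ⟨n, hn⟩ := Nat.exists_eq_succ_of_ne_zero ht
        have hle : Finsupp.single t 1 ≤ m := by rw [Finsupp.single_le_iff]; omega
        have hm0 : m ≠ 0 := fun h => ht (by simp [h])
        rw [if_pos hs, if_pos hle, hcoef, hsub_s, hsub_t, if_pos hs, if_neg hm0, hn]
        have h2 : Xt⁻¹ ^ (n + 1 + 1) = Xt⁻¹ ^ (n + 1) * Xt⁻¹ := pow_succ _ _
        have h3 : (-1 : K) ^ (n + 1) = (-1 : K) ^ n * (-1) := pow_succ _ _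
        simp only [Nat.add_sub_cancel, h2, h3]
        have h4 : Xt * Xt⁻¹ = 1 := mul_inv_cancel₀ hXt
        calc Xt * ((-1:K) ^ n * -1 * (Xt⁻¹ ^ (n+1) * Xt⁻¹))
              + 1 * ((-1:K) ^ n * Xt⁻¹ ^ (n+1))
            = (Xt * Xt⁻¹) * ((-1:K) ^ n * -1 * Xt⁻¹ ^ (n+1))
              + (-1:K) ^ n * Xt⁻¹ ^ (n+1) := by ring
          _ = 0 := by rw [h4]; ring
    · have hm0 : m ≠ 0 := fun h => hs (by simp [h])
      rw [if_neg hs, if_neg hm0]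
      by_cases hle : Finsupp.single t 1 ≤ m
      · rw [if_pos hle, hcoef, hsub_s, if_neg hs]; ring
      · rw [if_neg hle]; ring
  have hinv : e Xt⁻¹ = f := by
    have h1 : e Xt * e Xt⁻¹ = 1 := by
      rw [← map_mul, mul_inv_cancel₀ hXt, map_one]
    have h2 : e Xt * f = 1 := by rw [heXt]; exact hmul
    calc e Xt⁻¹ = e Xt⁻¹ * (e Xt * f) := by rw [h2, mul_one]
      _ = (e Xt * e Xt⁻¹) * f := by ring
      _ = f := by rw [h1, one_mul]
  have hfA : ∀ m, coeff m f ∈ A := by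
    intro m
    rw [hcoef]
    split
    · exact mul_mem (pow_mem (neg_mem (one_mem A)) _) (pow_mem hXtA _)
    · exact zero_mem A
  intro x hx
  induction hx using Algebra.adjoin_induction with
  | mem x hx =>
    rcases hx with h | h
    · -- x = Xs / Xt
      intro m
      subst h
      rw [div_eq_mul_inv, map_mul, hinv, heXs, add_mul, map_add, coeff_C_mul,
        X_def, coeff_monomial_mul]
      refine add_mem ?_ ?_
      · rw [hcoef]
        split
        · have : Xs * ((-1:K) ^ (m t) * Xt⁻¹ ^ (m t + 1))
              = (-1:K) ^ (m t) * ((Xs / Xt) * Xt⁻¹ ^ (m t)) := by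
            rw [div_eq_mul_inv, pow_succ]; ring
          rw [this]
          exact mul_mem (pow_mem (neg_mem (one_mem A)) _)
            (mul_mem hXsA (pow_mem hXtA _))
        · simpa using zero_mem A
      · split
        · rw [one_mul]; exact hfA _
        · exact zero_mem A
    · simp only [Set.mem_singleton_iff] at h
      subst h
      intro m
      rw [hinv]
      exact hfA m
  | algebraMap r =>
    intro m
    rw [heAlg, coeff_C]
    split
    · exact Subalgebra.algebraMap_mem A r
    · exact zero_mem A
  | add x y hx hy ihx ihy =>
    intro m
    rw [map_add, map_add]
    exact add_mem (ihx m) (ihy m)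
  | mul x y hx hy ihx ihy =>
    intro m
    rw [map_mul, coeff_mul]
    exact sum_mem fun p _ => mul_mem (ihx p.1) (ihy p.2)


/-- The canonical `𝔾ₐ²`-iterative HS-derivation on `k(X,Y)` (two-variable
Hasse derivatives), given by the coefficients of the map `e : k(X,Y) → k(X,Y)⟦U,V⟧`,
`X ↦ X + U`, `Y ↦ Y + V`, preserves the chart subrings `k[X/Y, 1/Y]` and `k[Y/X, 1/X]`. -/
theorem hasse_derivatives_preserve_P2_charts
    (k : Type*) [Field k]
    (e : FractionRing (MvPolynomial (Fin 2) k) →+*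
      MvPowerSeries (Fin 2) (FractionRing (MvPolynomial (Fin 2) k)))
    (he : ∀ q : MvPolynomial (Fin 2) k,
      e (algebraMap (MvPolynomial (Fin 2) k) (FractionRing (MvPolynomial (Fin 2) k)) q) =
        MvPolynomial.eval₂
          ((MvPowerSeries.C (σ := Fin 2) (R := FractionRing (MvPolynomial (Fin 2) k))).comp
            (algebraMap k (FractionRing (MvPolynomial (Fin 2) k))))
          (fun s => MvPowerSeries.C (σ := Fin 2) (R := FractionRing (MvPolynomial (Fin 2) k))
              (algebraMap (MvPolynomial (Fin 2) k) (FractionRing (MvPolynomial (Fin 2) k))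
                (MvPolynomial.X s)) +
            MvPowerSeries.X s) q)
    (D : ℕ → ℕ → FractionRing (MvPolynomial (Fin 2) k) →
      FractionRing (MvPolynomial (Fin 2) k))
    (hD : ∀ i j r, D i j r =
      MvPowerSeries.coeff (R := FractionRing (MvPolynomial (Fin 2) k))
        (Finsupp.single (0 : Fin 2) i + Finsupp.single (1 : Fin 2) j) (e r))
    (X Y : FractionRing (MvPolynomial (Fin 2) k))
    (hX : X = algebraMap (MvPolynomial (Fin 2) k) (FractionRing (MvPolynomial (Fin 2) k))
      (MvPolynomial.X 0))
    (hY : Y = algebraMap (MvPolynomial (Fin 2) k) (FractionRing (MvPolynomial (Fin 2) k))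
      (MvPolynomial.X 1)) :
    (∀ i j, ∀ x ∈ Algebra.adjoin k {X / Y, Y⁻¹}, D i j x ∈ Algebra.adjoin k {X / Y, Y⁻¹}) ∧
    (∀ i j, ∀ x ∈ Algebra.adjoin k {Y / X, X⁻¹}, D i j x ∈ Algebra.adjoin k {Y / X, X⁻¹}) := by
  set R := MvPolynomial (Fin 2) k
  set K := FractionRing R
  have heX : ∀ s : Fin 2, e (algebraMap R K (MvPolynomial.X s))
      = MvPowerSeries.C (σ := Fin 2) (R := K) (algebraMap R K (MvPolynomial.X s)) + MvPowerSeries.X s := by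
    intro s
    rw [he (MvPolynomial.X s), MvPolynomial.eval₂_X]
  have heAlg : ∀ c : k, e (algebraMap k K c)
      = MvPowerSeries.C (σ := Fin 2) (R := K) (algebraMap k K c) := by
    intro c
    rw [IsScalarTower.algebraMap_apply k R K, MvPolynomial.algebraMap_eq,
      he (MvPolynomial.C c), MvPolynomial.eval₂_C, RingHom.comp_apply,
      ← MvPolynomial.algebraMap_eq, ← IsScalarTower.algebraMap_apply k R K]
  have hne : ∀ s : Fin 2, algebraMap R K (MvPolynomial.X s) ≠ 0 := fun s =>
    (map_ne_zero_iff _ (IsFractionRing.injective R K)).mpr (MvPolynomial.X_ne_zero s)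
  subst hX hY
  constructor
  · intro i j x hx
    rw [hD]
    exact key_lemma e 0 1 (by decide) _ _ (hne 1) (heX 0) (heX 1) heAlg x hx _
  · intro i j x hx
    rw [hD]
    exact key_lemma e 1 0 (by decide) _ _ (hne 0) (heX 1) (heX 0) heAlg x hx _
end
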